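/- Let X be a random variable with ess sup X = +∞ whose distribution on some neighborhood (u₀, ∞) has a Lebesgue density f_X satisfying f_X(u) ~ C_X u^β exp(-K_X u^α) as u → ∞, with constants C_X, α, K_X > 0, β ∈ ℝ. Then P(X > u) ~ C_X α^{-1} K_X^{-1} u^{β + 1 - α} exp(-K_X u^α) as u → ∞. -/

import Mathlib

open MeasureTheory Filter Asymptotics

private lemma aux_tendsto (s K α : ℝ) (hK : 0 < K) (hα : 0 < α) :
    Tendsto (fun u : ℝ => u ^ s * Real.exp (-K * u ^ α)) atTop (nhds 0) := by
  have h2 := (tendsto_rpow_mul_exp_neg_mul_atTop_nhds_zero (s / α) K hK).comp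
    (tendsto_rpow_atTop hα)
  refine h2.congr' ?_
  filter_upwards [eventually_gt_atTop (0 : ℝ)] with u hu
  have : α * (s / α) = s := by field_simp
  simp only [Function.comp_apply, ← Real.rpow_mul hu.le, this]

private lemma aux_meas (c q K α : ℝ) :
    Measurable (fun u : ℝ => c * u ^ q * Real.exp (-K * u ^ α)) := by
  measurability

private lemma aux_intAt (c q K α : ℝ) (hK : 0 < K) (hα : 0 < α) :
    IntegrableAtFilter (fun u : ℝ => c * u ^ q * Real.exp (-K * u ^ α)) atTop
      (volume : Measure ℝ) := by
  have hO : (fun u : ℝ => c * u ^ q * Real.exp (-K * u ^ α)) =o[atTop]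
      fun u : ℝ => u ^ (-2 : ℝ) := by
    apply isLittleO_of_tendsto'
    · filter_upwards [eventually_gt_atTop (0 : ℝ)] with u hu h
      exact absurd h (by positivity)
    · have := (aux_tendsto (q + 2) K α hK hα).const_mul c
      rw [mul_zero] at this
      refine this.congr' ?_
      filter_upwards [eventually_gt_atTop (0 : ℝ)] with u hu
      rw [Real.rpow_neg hu.le, div_inv_eq_mul, Real.rpow_add hu]
      ring
  exact hO.isBigO.integrableAtFilter
    ⟨Set.univ, univ_mem, ((aux_meas c q K α).aestronglyMeasurable).restrict⟩
    ⟨Set.Ioi 1, Ioi_mem_atTop 1, integrableOn_Ioi_rpow_of_lt (by norm_num) one_pos⟩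

private lemma tail_equiv {f g : ℝ → ℝ} (hfg : f ~[atTop] g)
    (hg0 : ∀ᶠ t in atTop, 0 ≤ g t)
    (hfi : IntegrableAtFilter f atTop (volume : Measure ℝ))
    (hgi : IntegrableAtFilter g atTop (volume : Measure ℝ)) :
    (fun u => ∫ t in Set.Ioi u, f t) ~[atTop] fun u => ∫ t in Set.Ioi u, g t := by
  obtain ⟨sf, hsf, hfint⟩ := hfi
  obtain ⟨sg, hsg, hgint⟩ := hgi
  obtain ⟨af, haf⟩ := mem_atTop_sets.mp hsf
  obtain ⟨ag, hag⟩ := mem_atTop_sets.mp hsg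
  rw [IsEquivalent, isLittleO_iff]
  intro ε hε
  obtain ⟨a₀, ha₀⟩ := eventually_atTop.mp ((isLittleO_iff.mp hfg.isLittleO hε).and hg0)
  filter_upwards [eventually_ge_atTop (max (max af ag) a₀)] with u hu
  have huf : u ≥ af := le_trans (le_max_left _ _) (le_trans (le_max_left _ _) hu)
  have hug : u ≥ ag := le_trans (le_max_right _ _) (le_trans (le_max_left _ _) hu)
  have hua : u ≥ a₀ := le_trans (le_max_right _ _) hu
  have hfOn : IntegrableOn f (Set.Ioi u) := hfint.mono
    (fun t ht => haf t (le_trans huf (le_of_lt ht))) le_rfl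
  have hgOn : IntegrableOn g (Set.Ioi u) := hgint.mono
    (fun t ht => hag t (le_trans hug (le_of_lt ht))) le_rfl
  have hGnn : 0 ≤ ∫ t in Set.Ioi u, g t :=
    setIntegral_nonneg measurableSet_Ioi fun t ht =>
      (ha₀ t (le_trans hua (le_of_lt ht))).2
  simp only [Pi.sub_apply]
  calc ‖(∫ t in Set.Ioi u, f t) - ∫ t in Set.Ioi u, g t‖
      = ‖∫ t in Set.Ioi u, (f t - g t)‖ := by rw [integral_sub hfOn hgOn]
    _ ≤ ∫ t in Set.Ioi u, ε * g t := by
        refine norm_integral_le_of_norm_le (hgOn.const_mul ε) ?_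
        filter_upwards [ae_restrict_mem measurableSet_Ioi] with t ht
        have h := ha₀ t (le_trans hua (le_of_lt ht))
        calc ‖f t - g t‖ = ‖(f - g) t‖ := rfl
          _ ≤ ε * ‖g t‖ := h.1
          _ = ε * g t := by rw [Real.norm_of_nonneg h.2]
    _ = ε * ∫ t in Set.Ioi u, g t := integral_const_mul ε _
    _ = ε * ‖∫ t in Set.Ioi u, g t‖ := by rw [Real.norm_of_nonneg hGnn]


theorem tail_from_density_exp_power
    {Ω : Type*} [MeasurableSpace Ω] (μ : Measure Ω) [IsProbabilityMeasure μ]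
    (X : Ω → ℝ) (hXm : Measurable X)
    (hesssup : ∀ u : ℝ, μ {ω | X ω > u} ≠ 0)
    (u₀ : ℝ) (fX : ℝ → ℝ) (hfXm : Measurable fX)
    (hdens : ∀ s : Set ℝ, MeasurableSet s → s ⊆ Set.Ioi u₀ →
      (μ {ω | X ω ∈ s}).toReal = ∫ u in s, fX u)
    (CX KX α β : ℝ) (hCX : 0 < CX) (hKX : 0 < KX) (hα : 0 < α)
    (hf : fX ~[atTop] fun u => CX * u ^ β * Real.exp (-KX * u ^ α)) :
    (fun u => (μ {ω | X ω > u}).toReal)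
      ~[atTop] fun u =>
        CX * α⁻¹ * KX⁻¹ * u ^ (β + 1 - α) * Real.exp (-KX * u ^ α) := by
  set g : ℝ → ℝ := fun u => CX * u ^ β * Real.exp (-KX * u ^ α) with hg_def
  set G : ℝ → ℝ := fun u => CX * α⁻¹ * KX⁻¹ * u ^ (β + 1 - α) * Real.exp (-KX * u ^ α)
    with hG_def
  set φ : ℝ → ℝ := fun u => CX * u ^ β * Real.exp (-KX * u ^ α) -
      CX * α⁻¹ * KX⁻¹ * (β + 1 - α) * u ^ (β - α) * Real.exp (-KX * u ^ α) with hφ_def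
  -- positivity of g
  have hg0 : ∀ᶠ t in atTop, 0 ≤ g t := by
    filter_upwards [eventually_gt_atTop (0 : ℝ)] with t ht
    have := Real.exp_pos (-KX * t ^ α)
    have := Real.rpow_pos_of_pos ht β
    positivity
  -- integrabilities at atTop
  have hgi : IntegrableAtFilter g atTop (volume : Measure ℝ) := aux_intAt CX β KX α hKX hα
  have hφi : IntegrableAtFilter φ atTop (volume : Measure ℝ) := by
    obtain ⟨s1, hs1, h1⟩ := aux_intAt CX β KX α hKX hα
    obtain ⟨s2, hs2, h2⟩ := aux_intAt (CX * α⁻¹ * KX⁻¹ * (β + 1 - α)) (β - α) KX α hKX hα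
    exact ⟨s1 ∩ s2, inter_mem hs1 hs2,
      (h1.mono Set.inter_subset_left le_rfl).sub (h2.mono Set.inter_subset_right le_rfl)⟩
  have hfXi : IntegrableAtFilter fX atTop (volume : Measure ℝ) :=
    hf.isBigO.integrableAtFilter
      ⟨Set.univ, univ_mem, hfXm.aestronglyMeasurable.restrict⟩ hgi
  -- φ ~ g
  have hφg : φ ~[atTop] g := by
    have ho : (fun u : ℝ => CX * α⁻¹ * KX⁻¹ * (β + 1 - α) * u ^ (β - α) *
        Real.exp (-KX * u ^ α)) =o[atTop] g := by
      apply isLittleO_of_tendsto'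
      · filter_upwards [eventually_gt_atTop (0 : ℝ)] with u hu h
        have h1 := Real.exp_pos (-KX * u ^ α)
        have h2 := Real.rpow_pos_of_pos hu β
        exact absurd h (by simp only [hg_def]; positivity)
      · have ht : Tendsto (fun u : ℝ => (α⁻¹ * KX⁻¹ * (β + 1 - α)) * u ^ (-α)) atTop
            (nhds 0) := by
          simpa using (tendsto_rpow_neg_atTop hα).const_mul (α⁻¹ * KX⁻¹ * (β + 1 - α))
        refine ht.congr' ?_
        filter_upwards [eventually_gt_atTop (0 : ℝ)] with u hu
        have h1 := (Real.exp_pos (-KX * u ^ α)).ne'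
        have h2 := (Real.rpow_pos_of_pos hu β).ne'
        have e : u ^ (β - α) = u ^ β * u ^ (-α) := by
          rw [← Real.rpow_add hu, ← sub_eq_add_neg]
        simp only [hg_def]
        rw [e]
        field_simp
    rw [IsEquivalent]
    refine ho.neg_left.congr' (Eventually.of_forall fun u => ?_) EventuallyEq.rfl
    simp only [hφ_def, hg_def, Pi.sub_apply]
    ring
  -- tail integral of φ equals G
  have h4 : (fun u => ∫ t in Set.Ioi u, φ t) =ᶠ[atTop] G := by
    obtain ⟨sφ, hsφ, hφint⟩ := hφi
    obtain ⟨aφ, haφ⟩ := mem_atTop_sets.mp hsφ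
    have hGtend : Tendsto G atTop (nhds 0) := by
      have := (aux_tendsto (β + 1 - α) KX α hKX hα).const_mul (CX * α⁻¹ * KX⁻¹)
      rw [mul_zero] at this
      exact this.congr fun u => by simp only [hG_def]; ring
    filter_upwards [eventually_ge_atTop (max aφ 1)] with u hu
    have hu1 : (1 : ℝ) ≤ u := le_trans (le_max_right _ _) hu
    have hderiv : ∀ x ∈ Set.Ici u, HasDerivAt G (-φ x) x := by
      intro x hx
      have hx0 : (0 : ℝ) < x := lt_of_lt_of_le (lt_of_lt_of_le one_pos hu1) hx
      have h₁ : HasDerivAt (fun y : ℝ => CX * α⁻¹ * KX⁻¹ * y ^ (β + 1 - α))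
          (CX * α⁻¹ * KX⁻¹ * ((β + 1 - α) * x ^ (β + 1 - α - 1))) x :=
        (Real.hasDerivAt_rpow_const (Or.inl hx0.ne')).const_mul _
      have h₂ : HasDerivAt (fun y : ℝ => -KX * y ^ α) (-KX * (α * x ^ (α - 1))) x :=
        (Real.hasDerivAt_rpow_const (Or.inl hx0.ne')).const_mul _
      have h := h₁.mul h₂.exp
      convert h using 1
      · rfl
      · rfl
      · rfl
      have e1 : x ^ (β + 1 - α - 1) = x ^ (β - α) := by congr 1; ring
      have e2 : x ^ (β + 1 - α) * x ^ (α - 1) = x ^ β := by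
        rw [← Real.rpow_add hx0]; congr 1; ring
      have hc : CX * α⁻¹ * KX⁻¹ * KX * α = CX := by field_simp
      simp only [hφ_def]
      rw [e1]
      linear_combination (CX * α⁻¹ * KX⁻¹ * KX * α * Real.exp (-KX * x ^ α)) * e2 +
        (x ^ β * Real.exp (-KX * x ^ α)) * hc
    have hint : IntegrableOn (fun x => -φ x) (Set.Ioi u) :=
      (hφint.mono (fun t ht => haφ t (le_trans (le_trans (le_max_left _ _) hu)
        (le_of_lt ht))) le_rfl).neg
    have key := integral_Ioi_of_hasDerivAt_of_tendsto' hderiv hint hGtend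
    rw [zero_sub] at key
    have : ∫ t in Set.Ioi u, φ t = -∫ t in Set.Ioi u, (fun x => -φ x) t := by
      rw [integral_neg]; ring_nf
    rw [this, key, neg_neg]
  -- tail = integral of fX
  have h5 : (fun u => (μ {ω | X ω > u}).toReal) =ᶠ[atTop]
      fun u => ∫ t in Set.Ioi u, fX t := by
    filter_upwards [eventually_ge_atTop u₀] with u hu
    have := hdens (Set.Ioi u) measurableSet_Ioi (Set.Ioi_subset_Ioi hu)
    simpa [Set.mem_Ioi] using this
  exact h5.isEquivalent.trans ((tail_equiv hf hg0 hfXi hgi).trans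
    ((tail_equiv hφg hg0 hφi hgi).symm.trans h4.isEquivalent))
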